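/- Let f be a finite measurable function on (X, 𝒳, μ, T). If the set of points x such that B_n f(x) ≤ 0 for all n large enough has positive measure, i.e. if μ[⋃_{N>0} ⋂_{n>N} {B_n f ≤ 0}] > 0, then sup_{n>0} ∑_{i=0}^{n-1} f∘T^i < ∞ μ-almost everywhere on the whole space X. -/

import Mathlib

open MeasureTheory Filter Topology

private lemma limsup_le_add_of_tendsto_sub {u v : ℕ → ℝ}
    (hu0 : ∀ n, 0 ≤ u n) (hu1 : ∀ n, u n ≤ 1) (hv0 : ∀ n, 0 ≤ v n) (hv1 : ∀ n, v n ≤ 1)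
    (h : Filter.Tendsto (fun n => u n - v n) atTop (𝓝 0)) :
    limsup u atTop ≤ limsup v atTop := by
  refine le_of_forall_pos_le_add fun ε hε => ?_
  have hev : ∀ᶠ n in atTop, u n ≤ v n + ε := by
    filter_upwards [h.eventually (gt_mem_nhds hε)] with n hn
    linarith
  calc limsup u atTop ≤ limsup (fun n => v n + ε) atTop := by
        refine limsup_le_limsup hev ?_ ?_
        · exact (isBoundedUnder_of (r := (· ≥ ·)) ⟨0, hu0⟩).isCoboundedUnder_le
        · exact isBoundedUnder_of ⟨1 + ε, fun n => by linarith [hv1 n]⟩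
    _ = limsup v atTop + ε := by
        refine limsup_add_const atTop v ε ?_ ?_
        · exact isBoundedUnder_of ⟨1, hv1⟩
        · exact (isBoundedUnder_of (r := (· ≥ ·)) ⟨0, hv0⟩).isCoboundedUnder_le

private lemma limsup_eq_of_tendsto_sub {u v : ℕ → ℝ}
    (hu0 : ∀ n, 0 ≤ u n) (hu1 : ∀ n, u n ≤ 1) (hv0 : ∀ n, 0 ≤ v n) (hv1 : ∀ n, v n ≤ 1)
    (h : Filter.Tendsto (fun n => u n - v n) atTop (𝓝 0)) :
    limsup u atTop = limsup v atTop := by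
  refine le_antisymm (limsup_le_add_of_tendsto_sub hu0 hu1 hv0 hv1 h)
    (limsup_le_add_of_tendsto_sub hv0 hv1 hu0 hu1 ?_)
  have : (fun n => v n - u n) = fun n => -(u n - v n) := by funext n; ring
  rw [this]
  simpa using h.neg

private lemma ergodic_ae_const {X : Type*} [MeasurableSpace X] {μ : Measure X}
    [IsProbabilityMeasure μ] {τ : X → X} (hτ : Ergodic τ μ) {ψ : X → ℝ} (hψ : Measurable ψ)
    (h0 : ∀ x, 0 ≤ ψ x) (h1 : ∀ x, ψ x ≤ 1) (hinv : ∀ x, ψ (τ x) = ψ x) :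
    ∃ c : ℝ, c ≤ 1 ∧ ∀ᵐ x ∂μ, ψ x = c := by
  have hmeas : ∀ q : ℚ, MeasurableSet {x | ψ x ≤ (q : ℝ)} :=
    fun q => measurableSet_le hψ measurable_const
  have hzo : ∀ q : ℚ, μ {x | ψ x ≤ (q : ℝ)} = 0 ∨ μ {x | ψ x ≤ (q : ℝ)} = 1 := by
    intro q
    refine hτ.prob_eq_zero_or_one (hmeas q) ?_
    ext x
    simp only [Set.mem_preimage, Set.mem_setOf_eq, hinv x]
  set Q : Set ℚ := {q | μ {x | ψ x ≤ (q : ℝ)} = 1} with hQdef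
  have h1Q : (1 : ℚ) ∈ Q := by
    have huniv : {x | ψ x ≤ ((1 : ℚ) : ℝ)} = Set.univ := by
      ext x; simpa using (h1 x).trans (by norm_num)
    simp only [hQdef, Set.mem_setOf_eq, huniv, measure_univ]
  have hQnonneg : ∀ q ∈ Q, (0 : ℝ) ≤ (q : ℝ) := by
    intro q hq
    by_contra hlt
    push_neg at hlt
    have hempty : {x | ψ x ≤ (q : ℝ)} = ∅ := by
      ext x; simp only [Set.mem_setOf_eq, Set.mem_empty_iff_false, iff_false, not_le]
      exact lt_of_lt_of_le hlt (h0 x)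
    have : μ {x | ψ x ≤ (q : ℝ)} = 0 := by rw [hempty]; simp
    rw [hQdef] at hq
    simp only [Set.mem_setOf_eq, this] at hq
    exact one_ne_zero hq.symm
  have hne : ((↑) '' Q : Set ℝ).Nonempty := ⟨1, 1, h1Q, by norm_num⟩
  have hbdd : BddBelow ((↑) '' Q : Set ℝ) := ⟨0, by rintro _ ⟨q, hq, rfl⟩; exact hQnonneg q hq⟩
  set c := sInf ((↑) '' Q : Set ℝ) with hcdef
  refine ⟨c, csInf_le hbdd ⟨1, h1Q, by norm_num⟩, ?_⟩
  have hle : ∀ᵐ x ∂μ, ∀ q : ℚ, q ∈ Q → ψ x ≤ q := by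
    rw [ae_all_iff]
    intro q
    by_cases hq : q ∈ Q
    · have hμ : μ {x | ψ x ≤ (q : ℝ)}ᶜ = 0 := by
        rw [measure_compl (hmeas q) (measure_ne_top _ _), hq, measure_univ, tsub_self]
      have : ∀ᵐ x ∂μ, ψ x ≤ (q : ℝ) := by
        rw [ae_iff]
        simpa [Set.compl_setOf] using hμ
      exact this.mono fun x hx _ => hx
    · exact ae_of_all _ fun x h => absurd h hq
  have hge : ∀ᵐ x ∂μ, ∀ q : ℚ, q ∉ Q → (q : ℝ) < ψ x := by
    rw [ae_all_iff]
    intro q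
    by_cases hq : q ∈ Q
    · exact ae_of_all _ fun x h => absurd hq h
    · have hμ : μ {x | ψ x ≤ (q : ℝ)} = 0 := (hzo q).resolve_right hq
      have : ∀ᵐ x ∂μ, ¬ ψ x ≤ (q : ℝ) := by
        rw [ae_iff]; simpa using hμ
      exact this.mono fun x hx _ => lt_of_not_ge hx
  filter_upwards [hle, hge] with x hx1 hx2
  refine le_antisymm ?_ ?_
  · refine le_csInf hne ?_
    rintro _ ⟨q, hq, rfl⟩
    exact hx1 q hq
  · by_contra hlt
    push_neg at hlt
    obtain ⟨q, hq1, hq2⟩ := exists_rat_btwn hlt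
    have hqQ : q ∉ Q := fun hmem => absurd (csInf_le hbdd ⟨q, hmem, rfl⟩) (not_le.mpr hq2)
    exact absurd (hx2 q hqQ) (not_lt.mpr hq1.le)

private lemma kw_upper {X : Type*} [MeasurableSpace X] {μ : Measure X}
    [IsProbabilityMeasure μ] {τ : X → X} (hτm : Measurable τ)
    (hτ : MeasurePreserving τ μ μ) (hτemb : MeasurableEmbedding τ)
    {g : X → ℝ} (hg : Measurable g) (hg0 : ∀ x, 0 ≤ g x) (hg1 : ∀ x, g x ≤ 1)
    {c : ℝ} (hc1 : c ≤ 1)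
    (hc : ∀ᵐ y ∂μ, ∃ n : ℕ, 1 ≤ n ∧ c * n ≤ birkhoffSum τ g n y) :
    c ≤ ∫ x, g x ∂μ := by
  rcases le_or_gt c 0 with hc0 | hc0
  · exact hc0.trans (integral_nonneg hg0)
  refine le_of_forall_pos_le_add fun ε hε => ?_
  -- bad sets
  set Bad : ℕ → Set X := fun M => {y | ∀ n : ℕ, 1 ≤ n → n ≤ M → birkhoffSum τ g n y < c * n}
    with hBadDef
  have hSmeas : ∀ n : ℕ, Measurable (fun y => birkhoffSum τ g n y) := by
    intro n
    unfold birkhoffSum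
    exact Finset.measurable_sum _ fun i _ => hg.comp (hτm.iterate i)
  have hBadMeas : ∀ M, MeasurableSet (Bad M) := by
    intro M
    have : Bad M = ⋂ (n : ℕ) (_ : 1 ≤ n) (_ : n ≤ M),
        {y | birkhoffSum τ g n y < c * n} := by
      ext y; simp [hBadDef, Set.mem_iInter]
    rw [this]
    exact MeasurableSet.iInter fun n => MeasurableSet.iInter fun _ =>
      MeasurableSet.iInter fun _ => measurableSet_lt (hSmeas n) measurable_const
  have hAnti : Antitone Bad := by
    intro M M' hMM' y hy n h1 h2
    exact hy n h1 (h2.trans hMM')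
  have hInter : μ (⋂ M, Bad M) = 0 := by
    have hsub : (⋂ M, Bad M) ⊆ {y | ¬ ∃ n : ℕ, 1 ≤ n ∧ c * n ≤ birkhoffSum τ g n y} := by
      intro y hy
      simp only [Set.mem_iInter] at hy
      rintro ⟨n, hn1, hn2⟩
      exact absurd hn2 (not_le.mpr (hy n n hn1 le_rfl))
    refine measure_mono_null hsub ?_
    rw [← compl_compl {y | ¬ ∃ n : ℕ, 1 ≤ n ∧ c * n ≤ birkhoffSum τ g n y}]
    rw [Set.compl_setOf]
    simp only [not_not]
    exact hc
  have htend : Tendsto (fun M => μ (Bad M)) atTop (𝓝 0) := by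
    have := tendsto_measure_iInter_atTop (fun M => (hBadMeas M).nullMeasurableSet) hAnti
      ⟨0, measure_ne_top μ _⟩
    rwa [hInter] at this
  have hev : ∀ᶠ M in atTop, μ (Bad M) < ENNReal.ofReal (ε / 2) := by
    refine htend.eventually_lt_const ?_
    simpa using ENNReal.ofReal_pos.mpr (by linarith)
  obtain ⟨M, hM1, hMlt⟩ : ∃ M : ℕ, 1 ≤ M ∧ μ (Bad M) < ENNReal.ofReal (ε / 2) := by
    obtain ⟨M, h1, h2⟩ := ((eventually_ge_atTop 1).and hev).exists
    exact ⟨M, h1, h2⟩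
  have hBadReal : (μ (Bad M)).toReal ≤ ε / 2 :=
    ENNReal.toReal_le_of_le_ofReal (by linarith) hMlt.le
  -- modified function
  set gt : X → ℝ := fun y => g y + (Bad M).indicator (fun _ => (1:ℝ)) y with hgtDef
  have hgt0 : ∀ x, 0 ≤ gt x := fun x => add_nonneg (hg0 x) (Set.indicator_nonneg (by simp) x)
  have hind01 : ∀ x, (0:ℝ) ≤ (Bad M).indicator (fun _ => (1:ℝ)) x ∧
      (Bad M).indicator (fun _ => (1:ℝ)) x ≤ 1 := by
    intro x
    by_cases hx : x ∈ Bad M <;> simp [Set.indicator_of_mem, Set.indicator_of_notMem, hx]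
  have hgt2 : ∀ x, gt x ≤ 2 := fun x => by
    have := (hind01 x).2; have := hg1 x; simp only [hgtDef]; linarith
  have hgtmeas : Measurable gt :=
    hg.add ((measurable_const (a := (1:ℝ))).indicator (hBadMeas M))
  have hgtint : Integrable gt μ := by
    refine ⟨hgtmeas.aestronglyMeasurable, ?_⟩
    refine HasFiniteIntegral.of_bounded (C := 2) (ae_of_all _ fun x => ?_)
    rw [Real.norm_eq_abs, abs_le]
    constructor
    · linarith [hgt0 x]
    · exact hgt2 x
  -- step: stopping time bounded by M
  have step : ∀ y : X, ∃ n : ℕ, 1 ≤ n ∧ n ≤ M ∧ c * n ≤ birkhoffSum τ gt n y := by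
    intro y
    by_cases hy : y ∈ Bad M
    · refine ⟨1, le_rfl, hM1, ?_⟩
      rw [birkhoffSum_one]
      have : (Bad M).indicator (fun _ => (1:ℝ)) y = 1 := Set.indicator_of_mem hy _
      simp only [hgtDef, this, Nat.cast_one, mul_one]
      linarith [hg0 y]
    · rw [hBadDef, Set.mem_setOf_eq] at hy
      push_neg at hy
      obtain ⟨n, hn1, hnM, hcn⟩ := hy
      refine ⟨n, hn1, hnM, hcn.trans ?_⟩
      unfold birkhoffSum
      refine Finset.sum_le_sum fun i _ => ?_
      simp only [hgtDef]
      linarith [(hind01 (τ^[i] y)).1]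
  -- covering induction
  have key : ∀ L : ℕ, ∀ y : X, c * ((L : ℝ) - M) ≤ birkhoffSum τ gt L y := by
    intro L
    induction L using Nat.strong_induction_on with
    | _ L IH =>
      intro y
      rcases le_or_gt L M with hLM | hLM
      · have h1 : c * ((L : ℝ) - M) ≤ 0 := by
          apply mul_nonpos_of_nonneg_of_nonpos hc0.le
          have : (L : ℝ) ≤ M := Nat.cast_le.mpr hLM
          linarith
        refine h1.trans ?_
        unfold birkhoffSum
        exact Finset.sum_nonneg fun i _ => hgt0 _
      · obtain ⟨n, hn1, hnM, hcn⟩ := step y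
        have hnL : n < L := lt_of_le_of_lt hnM hLM
        have hsplit : birkhoffSum τ gt L y
            = birkhoffSum τ gt n y + birkhoffSum τ gt (L - n) (τ^[n] y) := by
          rw [← birkhoffSum_add]
          congr 1
          omega
        have hIH := IH (L - n) (by omega) (τ^[n] y)
        have hcast : ((L - n : ℕ) : ℝ) = (L : ℝ) - n := by
          push_cast [hnL.le]; ring
        rw [hsplit]
        rw [hcast] at hIH
        nlinarith [hIH, hcn]
  -- integrate
  have hcomp : ∀ i : ℕ, ∫ y, gt (τ^[i] y) ∂μ = ∫ y, gt y ∂μ := by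
    intro i
    induction i with
    | zero => simp
    | succ i ih =>
      simp only [Function.iterate_succ_apply]
      exact (hτ.integral_comp hτemb fun z => gt (τ^[i] z)).trans ih
  have hterm_int : ∀ i : ℕ, Integrable (fun y => gt (τ^[i] y)) μ := by
    intro i
    refine ⟨(hgtmeas.comp (hτm.iterate i)).aestronglyMeasurable, ?_⟩
    refine HasFiniteIntegral.of_bounded (C := 2) (ae_of_all _ fun x => ?_)
    rw [Real.norm_eq_abs, abs_le]
    exact ⟨by linarith [hgt0 (τ^[i] x)], hgt2 _⟩
  have hSint : ∀ L : ℕ, Integrable (fun y => birkhoffSum τ gt L y) μ := by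
    intro L
    unfold birkhoffSum
    exact integrable_finset_sum _ fun i _ => hterm_int i
  have hintS : ∀ L : ℕ, ∫ y, birkhoffSum τ gt L y ∂μ = L * ∫ y, gt y ∂μ := by
    intro L
    unfold birkhoffSum
    rw [integral_finset_sum _ fun i _ => hterm_int i]
    rw [Finset.sum_congr rfl fun i _ => hcomp i]
    simp [Finset.sum_const, nsmul_eq_mul]
  have hIneq : ∀ L : ℕ, c * ((L : ℝ) - M) ≤ L * ∫ y, gt y ∂μ := by
    intro L
    rw [← hintS L]
    have h1 : ∫ (_ : X), c * ((L : ℝ) - M) ∂μ = c * ((L : ℝ) - M) := by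
      simp [integral_const]
    calc c * ((L : ℝ) - M) = ∫ (_ : X), c * ((L : ℝ) - M) ∂μ := h1.symm
      _ ≤ ∫ y, birkhoffSum τ gt L y ∂μ :=
          integral_mono (integrable_const _) (hSint L) fun y => key L y
  have hgtI : ∫ y, gt y ∂μ ≤ (∫ x, g x ∂μ) + ε / 2 := by
    have hsplit : ∫ y, gt y ∂μ
        = (∫ x, g x ∂μ) + ∫ x, (Bad M).indicator (fun _ => (1:ℝ)) x ∂μ := by
      simp only [hgtDef]
      refine integral_add ?_ ?_
      · refine ⟨hg.aestronglyMeasurable, ?_⟩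
        refine HasFiniteIntegral.of_bounded (C := 1) (ae_of_all _ fun x => ?_)
        rw [Real.norm_eq_abs, abs_le]
        exact ⟨by linarith [hg0 x], hg1 x⟩
      · refine ⟨((measurable_const (a := (1:ℝ))).indicator (hBadMeas M)).aestronglyMeasurable, ?_⟩
        refine HasFiniteIntegral.of_bounded (C := 1) (ae_of_all _ fun x => ?_)
        rw [Real.norm_eq_abs, abs_le]
        exact ⟨by linarith [(hind01 x).1], (hind01 x).2⟩
    rw [hsplit]
    have : ∫ x, (Bad M).indicator (fun _ => (1:ℝ)) x ∂μ = (μ (Bad M)).toReal := by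
      have h1 : (Bad M).indicator (fun _ => (1:ℝ)) = (Bad M).indicator (1 : X → ℝ) := rfl
      rw [h1, integral_indicator_one (hBadMeas M)]; rfl
    rw [this]
    linarith [hBadReal]
  -- final arithmetic
  obtain ⟨L, hL⟩ := exists_nat_gt (2 * M / ε)
  have hL0 : (0:ℝ) < L := lt_of_le_of_lt (by positivity) hL
  have hML : (M : ℝ) / L < ε / 2 := by
    rw [div_lt_iff₀ hL0]
    rw [div_lt_iff₀ hε] at hL
    linarith
  have hfinal := (hIneq L).trans (mul_le_mul_of_nonneg_left hgtI (by positivity))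
  have hLne : (L:ℝ) ≠ 0 := ne_of_gt hL0
  have hcM : c * M ≤ (M : ℝ) := by
    have : (0:ℝ) ≤ M := by positivity
    nlinarith
  have h2 : c * L ≤ L * ((∫ x, g x ∂μ) + ε / 2) + M := by nlinarith [hfinal, hcM]
  have h3 : ((∫ x, g x ∂μ) + ε / 2 + (M : ℝ) / L) * L
      = L * ((∫ x, g x ∂μ) + ε / 2) + M := by
    field_simp
  have h4 : c ≤ (∫ x, g x ∂μ) + ε / 2 + (M : ℝ) / L := by
    refine le_of_mul_le_mul_right ?_ hL0
    rw [h3]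
    exact h2
  linarith [hML, h4]

private lemma kw_limsup {X : Type*} [MeasurableSpace X] {μ : Measure X}
    [IsProbabilityMeasure μ] {τ : X → X} (hτm : Measurable τ)
    (hτ : Ergodic τ μ) (hτemb : MeasurableEmbedding τ)
    {g : X → ℝ} (hg : Measurable g) (hg0 : ∀ x, 0 ≤ g x) (hg1 : ∀ x, g x ≤ 1) :
    ∀ᵐ y ∂μ, limsup (fun n : ℕ => birkhoffSum τ g n y / n) atTop ≤ ∫ x, g x ∂μ := by
  have hb : ∀ (y : X) (n : ℕ), 0 ≤ birkhoffSum τ g n y / n ∧ birkhoffSum τ g n y / n ≤ 1 := by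
    intro y n
    rcases Nat.eq_zero_or_pos n with rfl | hn
    · simp
    have hnpos : (0:ℝ) < n := by exact_mod_cast hn
    constructor
    · refine div_nonneg ?_ hnpos.le
      exact Finset.sum_nonneg fun i _ => hg0 _
    · rw [div_le_one hnpos]
      calc birkhoffSum τ g n y ≤ ∑ _i ∈ Finset.range n, (1:ℝ) :=
            Finset.sum_le_sum fun i _ => hg1 _
        _ = n := by simp
  set ψ : X → ℝ := fun y => limsup (fun n : ℕ => birkhoffSum τ g n y / n) atTop with hψdef
  have hSmeas : ∀ n : ℕ, Measurable (fun y => birkhoffSum τ g n y) := by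
    intro n
    unfold birkhoffSum
    exact Finset.measurable_sum _ fun i _ => hg.comp (hτm.iterate i)
  have hψmeas : Measurable ψ := Measurable.limsup fun n => (hSmeas n).div_const _
  have hψ0 : ∀ y, 0 ≤ ψ y := by
    intro y
    refine le_limsup_of_frequently_le (Frequently.of_forall fun n => (hb y n).1) ?_
    exact isBoundedUnder_of ⟨1, fun n => (hb y n).2⟩
  have hψ1 : ∀ y, ψ y ≤ 1 := by
    intro y
    refine limsup_le_of_le ?_ (Eventually.of_forall fun n => (hb y n).2)
    exact (isBoundedUnder_of (r := (· ≥ ·)) ⟨0, fun n => (hb y n).1⟩).isCoboundedUnder_le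
  have hψinv : ∀ y, ψ (τ y) = ψ y := by
    intro y
    refine limsup_eq_of_tendsto_sub (fun n => (hb (τ y) n).1) (fun n => (hb (τ y) n).2)
      (fun n => (hb y n).1) (fun n => (hb y n).2) ?_
    have heq : ∀ n : ℕ, birkhoffSum τ g n (τ y) / n - birkhoffSum τ g n y / n
        = (g (τ^[n] y) - g y) / n := by
      intro n
      rw [div_sub_div_same, birkhoffSum_apply_sub_birkhoffSum]
    refine squeeze_zero_norm (fun n => ?_) (tendsto_const_div_atTop_nhds_zero_nat 2)
    rw [heq]
    rcases Nat.eq_zero_or_pos n with rfl | hn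
    · simp
    have hnpos : (0:ℝ) < n := by exact_mod_cast hn
    rw [Real.norm_eq_abs, abs_div, abs_of_pos hnpos]
    have h1 := hg0 y; have h2 := hg1 y; have h3 := hg0 (τ^[n] y); have h4 := hg1 (τ^[n] y)
    have habs : |g (τ^[n] y) - g y| ≤ 2 := by rw [abs_le]; constructor <;> linarith
    gcongr
  obtain ⟨a, ha1, hae⟩ := ergodic_ae_const hτ hψmeas hψ0 hψ1 hψinv
  have ha_le : a ≤ ∫ x, g x ∂μ := by
    refine le_of_forall_pos_le_add fun ε hε => ?_
    have hup := kw_upper (μ := μ) hτm hτ.toMeasurePreserving hτemb hg hg0 hg1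
      (c := a - ε) (by linarith) ?_
    · linarith
    filter_upwards [hae] with y hy
    have hlt : a - ε < limsup (fun n : ℕ => birkhoffSum τ g n y / n) atTop := by
      have : ψ y = a := hy
      rw [hψdef] at this
      simp only at this
      rw [this]
      linarith
    have hfreq : ∃ᶠ n in atTop, a - ε < birkhoffSum τ g n y / n :=
      frequently_lt_of_lt_limsup
        ((isBoundedUnder_of (r := (· ≥ ·)) ⟨0, fun n => (hb y n).1⟩).isCoboundedUnder_le) hlt
    obtain ⟨n, hn1, hnlt⟩ := (hfreq.and_eventually (eventually_ge_atTop 1)).exists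
    refine ⟨n, hnlt, ?_⟩
    have hnpos : (0:ℝ) < n := by exact_mod_cast hnlt
    have := (lt_div_iff₀ hnpos).mp hn1
    linarith
  filter_upwards [hae] with y hy
  have : ψ y = a := hy
  rw [hψdef] at this
  simp only at this
  rw [this]
  exact ha_le

private lemma window_sum_eq {X : Type*} (T : Equiv.Perm X) (f : X → ℝ) (y : X) (m n : ℕ)
    (hnm : n ≤ m) :
    ∑ i ∈ Finset.Icc (-(n:ℤ)) (n:ℤ), f ((T ^ i) ((⇑T)^[m] y))
      = ∑ i ∈ Finset.range (m+n+1), f ((T ^ i) y)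
        - ∑ i ∈ Finset.range (m-n), f ((T ^ i) y) := by
  have hterm : ∀ i ∈ Finset.Icc (-(n:ℤ)) (n:ℤ),
      f ((T ^ i) ((⇑T)^[m] y)) = f ((T ^ ((i + (m:ℤ)).toNat)) y) := by
    intro i hi
    simp only [Finset.mem_Icc] at hi
    congr 1
    have hm : (⇑T)^[m] y = (T ^ ((m:ℕ):ℤ)) y := by
      rw [zpow_natCast]
      rfl
    rw [hm, ← Equiv.Perm.mul_apply, ← zpow_add]
    have hnn : (0:ℤ) ≤ i + (m:ℤ) := by omega
    conv_lhs => rw [show i + (m:ℤ) = (((i + (m:ℤ)).toNat : ℕ) : ℤ) from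
      (Int.toNat_of_nonneg hnn).symm]
    rw [zpow_natCast]
  rw [Finset.sum_congr rfl hterm]
  have hre : ∑ i ∈ Finset.Icc (-(n:ℤ)) (n:ℤ), f ((T ^ ((i + (m:ℤ)).toNat)) y)
      = ∑ j ∈ Finset.Icc (m - n) (m + n), f ((T ^ j) y) := by
    refine Finset.sum_nbij' (fun i : ℤ => (i + (m:ℤ)).toNat) (fun j : ℕ => (j : ℤ) - (m:ℤ))
      ?_ ?_ ?_ ?_ ?_
    · intro a ha
      simp only [Finset.mem_Icc] at ha ⊢
      omega
    · intro a ha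
      simp only [Finset.mem_Icc] at ha ⊢
      omega
    · intro a ha
      simp only [Finset.mem_Icc] at ha
      omega
    · intro a ha
      simp only [Finset.mem_Icc] at ha
      omega
    · intro a _
      rfl
  rw [hre]
  have h1 : Finset.Icc (m - n) (m + n) = Finset.Ico (m - n) (m + n + 1) := by
    rw [Finset.Ico_add_one_right_eq_Icc]
  rw [h1]
  have h2 := Finset.sum_Ico_consecutive (fun j => f ((T ^ j) y))
    (Nat.zero_le (m - n)) (show m - n ≤ m + n + 1 by omega)
  simp only [← Finset.range_eq_Ico] at h2
  linarith [h2]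

/-- **Lemma 2.** Let `f` be a finite measurable function on an ergodic invertible
probability-preserving system `(X, μ, T)`. If the set of points `x` such that
`B_n f(x) ≤ 0` for all `n` large enough has positive measure, i.e. if
`μ (⋃_{N>0} ⋂_{n>N} {B_n f ≤ 0}) > 0`, then `sup_{n>0} ∑_{i=0}^{n-1} f ∘ T^i < ∞`
almost everywhere on the whole space `X`. -/
theorem lemma2_bilateral_negative_implies_bounded_sums
    {X : Type*} [MeasurableSpace X] (μ : Measure X) [IsProbabilityMeasure μ]
    (T : Equiv.Perm X) (hTmeas : Measurable (⇑T)) (hTmeas' : Measurable (⇑T.symm))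
    (hT : Ergodic (⇑T) μ)
    (f : X → ℝ) (hf : Measurable f)
    (B : ℕ → X → ℝ)
    (hB : ∀ n x, B n x
      = (2 * (n : ℝ) + 1)⁻¹ * ∑ i ∈ Finset.Icc (-(n : ℤ)) (n : ℤ), f ((T ^ i) x))
    (hpos : 0 < μ (⋃ N : ℕ, ⋂ n ∈ Set.Ioi N, {x | B n x ≤ 0})) :
    ∀ᵐ x ∂μ, BddAbove (Set.range fun n : ℕ => ∑ i ∈ Finset.range (n + 1), f ((T ^ i) x)) := by
  classical
  have hTemb : MeasurableEmbedding ⇑T :=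
    (MeasurableEquiv.mk T hTmeas hTmeas').measurableEmbedding
  have hTiterMeas : ∀ i : ℕ, Measurable ⇑(T ^ i) := fun i => by
    rw [Equiv.Perm.coe_pow]
    exact hTmeas.iterate i
  have hTzMeas : ∀ i : ℤ, Measurable ⇑(T ^ i) := by
    intro i
    induction i using Int.induction_on with
    | zero => simpa using measurable_id
    | succ i ih =>
      have hco : ⇑(T ^ ((i:ℤ) + 1)) = ⇑(T ^ (i:ℤ)) ∘ ⇑T := by
        funext x
        rw [zpow_add_one]
        exact Equiv.Perm.mul_apply _ _ _
      rw [hco]; exact ih.comp hTmeas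
    | pred i ih =>
      have hco : ⇑(T ^ (-(i:ℤ) - 1)) = ⇑(T ^ (-(i:ℤ))) ∘ ⇑T.symm := by
        funext x
        rw [zpow_sub_one]
        rw [Equiv.Perm.mul_apply]
        congr 1
      rw [hco]; exact ih.comp hTmeas'
  set S : ℕ → X → ℝ := fun k x => ∑ i ∈ Finset.range k, f ((T ^ i) x) with hSdef
  have hSmeas : ∀ k, Measurable (S k) := fun k =>
    Finset.measurable_sum _ fun i _ => hf.comp (hTiterMeas i)
  set E : Set X := {x | BddAbove (Set.range fun n : ℕ => S (n+1) x)} with hEdef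
  have hEmeas : MeasurableSet E := measurableSet_bddAbove_range fun n => hSmeas (n+1)
  have hSsh : ∀ (t : ℕ) (x : X), S t (T x) = S (t+1) x - f x := by
    intro t x
    have h1 : ∀ i : ℕ, f ((T ^ i) (T x)) = f ((T ^ (i+1)) x) := by
      intro i
      rw [pow_succ, Equiv.Perm.mul_apply]
    have h2 := Finset.sum_range_succ' (fun i => f ((T ^ i) x)) t
    simp only [hSdef]
    rw [Finset.sum_congr rfl fun i _ => h1 i]
    rw [h2]
    simp
  have hEinv : ⇑T ⁻¹' E = E := by
    ext x
    simp only [Set.mem_preimage, hEdef, Set.mem_setOf_eq]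
    constructor
    · rintro ⟨b, hb⟩
      refine ⟨max (S 1 x) (b + f x), ?_⟩
      rintro v ⟨n, rfl⟩
      rcases n with _ | n
      · exact le_max_left _ _
      · have hb1 : S (n+1) (T x) ≤ b := hb ⟨n, rfl⟩
        have heq := hSsh (n+1) x
        refine le_trans ?_ (le_max_right _ _)
        show S (n+1+1) x ≤ b + f x
        linarith
    · rintro ⟨b, hb⟩
      refine ⟨b - f x, ?_⟩
      rintro v ⟨n, rfl⟩
      show S (n+1) (T x) ≤ b - f x
      have heq := hSsh (n+1) x
      have hb1 : S (n+1+1) x ≤ b := hb ⟨n+1, rfl⟩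
      linarith
  rcases hT.toPreErgodic.ae_empty_or_univ hEmeas hEinv with hE0 | hE1
  case inr =>
    have hcompl : μ Eᶜ = 0 := ae_eq_univ.mp hE1
    exact eventually_of_mem (mem_ae_iff.mpr hcompl) fun x hx => hx
  case inl =>
    have hbad : ∀ᵐ x ∂μ, x ∉ E := measure_eq_zero_iff_ae_notMem.mp (ae_eq_empty.mp hE0)
    have hexN : ∃ N : ℕ, μ (⋂ n ∈ Set.Ioi N, {x | B n x ≤ 0}) ≠ 0 := by
      by_contra hcon
      push_neg at hcon
      exact absurd (measure_iUnion_null hcon) (ne_of_gt hpos)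
    obtain ⟨N, hN⟩ := hexN
    set A : Set X := ⋂ n ∈ Set.Ioi N, {x | B n x ≤ 0} with hAdef
    have hBmeas : ∀ n, Measurable (B n) := by
      intro n
      have hBfun : B n = fun x =>
          (2*(n:ℝ)+1)⁻¹ * ∑ i ∈ Finset.Icc (-(n:ℤ)) (n:ℤ), f ((T^i) x) := funext (hB n)
      rw [hBfun]
      exact (Finset.measurable_sum _ fun i _ => hf.comp (hTzMeas i)).const_mul _
    have hAmeas : MeasurableSet A := by
      refine MeasurableSet.biInter (Set.to_countable _) fun n _ => ?_
      exact measurableSet_le (hBmeas n) measurable_const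
    have hAwin : ∀ z ∈ A, ∀ n : ℕ, N < n →
        ∑ i ∈ Finset.Icc (-(n:ℤ)) (n:ℤ), f ((T ^ i) z) ≤ 0 := by
      intro z hz n hn
      have hzB : B n z ≤ 0 := by
        rw [hAdef] at hz
        exact Set.mem_iInter₂.mp hz n hn
      have heq := hB n z
      have hpos' : (0:ℝ) < (2*(n:ℝ)+1)⁻¹ := by positivity
      by_contra hcon
      push_neg at hcon
      have hmul := mul_pos hpos' hcon
      rw [← heq] at hmul
      linarith
    set g : X → ℝ := A.indicator (fun _ => (1:ℝ)) with hgdef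
    have hgmeas : Measurable g := (measurable_const (a := (1:ℝ))).indicator hAmeas
    have hg01 : ∀ x, 0 ≤ g x ∧ g x ≤ 1 := fun x => by
      by_cases hx : x ∈ A <;>
        simp [hgdef, Set.indicator_of_mem, Set.indicator_of_notMem, hx]
    set δ : ℝ := ∫ x, g x ∂μ with hδdef
    have hδpos : 0 < δ := by
      have hδA : δ = (μ A).toReal := by
        rw [hδdef, hgdef]
        exact integral_indicator_one hAmeas
      rw [hδA]
      exact ENNReal.toReal_pos hN (measure_ne_top μ _)
    have hδ1 : δ ≤ 1 := by
      rw [hδdef]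
      calc ∫ x, g x ∂μ ≤ ∫ _x, (1:ℝ) ∂μ := by
            refine integral_mono ?_ (integrable_const 1) fun x => (hg01 x).2
            refine ⟨hgmeas.aestronglyMeasurable, ?_⟩
            refine HasFiniteIntegral.of_bounded (C := 1) (ae_of_all _ fun x => ?_)
            rw [Real.norm_eq_abs, abs_le]
            exact ⟨by linarith [(hg01 x).1], (hg01 x).2⟩
        _ = 1 := by simp
    set g' : X → ℝ := fun x => 1 - g x with hg'def
    have hg'meas : Measurable g' := measurable_const.sub hgmeas
    have hg'01 : ∀ x, 0 ≤ g' x ∧ g' x ≤ 1 := fun x => by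
      have := hg01 x
      constructor <;> simp [hg'def] <;> linarith [this.1, this.2]
    have hgint : Integrable g μ := by
      refine ⟨hgmeas.aestronglyMeasurable, ?_⟩
      refine HasFiniteIntegral.of_bounded (C := 1) (ae_of_all _ fun x => ?_)
      rw [Real.norm_eq_abs, abs_le]
      exact ⟨by linarith [(hg01 x).1], (hg01 x).2⟩
    have hIg' : ∫ x, g' x ∂μ = 1 - δ := by
      simp only [hg'def]
      rw [integral_sub (integrable_const 1) hgint]
      simp [hδdef]
    have hup := kw_limsup hTmeas hT hTemb hgmeas (fun x => (hg01 x).1) (fun x => (hg01 x).2)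
    have hup' := kw_limsup hTmeas hT hTemb hg'meas (fun x => (hg'01 x).1) (fun x => (hg'01 x).2)
    rw [hIg'] at hup'
    haveI : (ae μ).NeBot := ae_neBot.mpr (IsProbabilityMeasure.ne_zero μ)
    obtain ⟨y, hyE, hy1, hy2⟩ := (hbad.and (hup.and hup')).exists
    exfalso
    -- bounds on averages at y
    have havg : ∀ (G : X → ℝ), (∀ x, 0 ≤ G x ∧ G x ≤ 1) → ∀ t : ℕ,
        0 ≤ birkhoffSum ⇑T G t y / t ∧ birkhoffSum ⇑T G t y / t ≤ 1 := by
      intro G hG t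
      rcases Nat.eq_zero_or_pos t with rfl | ht
      · simp
      have htpos : (0:ℝ) < t := by exact_mod_cast ht
      constructor
      · exact div_nonneg (Finset.sum_nonneg fun i _ => (hG _).1) htpos.le
      · rw [div_le_one htpos]
        calc birkhoffSum ⇑T G t y ≤ ∑ _i ∈ Finset.range t, (1:ℝ) :=
              Finset.sum_le_sum fun i _ => (hG _).2
          _ = t := by simp
    have hev1 : ∀ᶠ t : ℕ in atTop, birkhoffSum ⇑T g t y / t < δ + δ/8 :=
      eventually_lt_of_limsup_lt (lt_of_le_of_lt hy1 (by linarith))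
        (isBoundedUnder_of ⟨1, fun t => (havg g hg01 t).2⟩)
    have hev2 : ∀ᶠ t : ℕ in atTop, birkhoffSum ⇑T g' t y / t < (1 - δ) + δ/8 :=
      eventually_lt_of_limsup_lt (lt_of_le_of_lt hy2 (by linarith))
        (isBoundedUnder_of ⟨1, fun t => (havg g' hg'01 t).2⟩)
    obtain ⟨t₀, ht₀⟩ := eventually_atTop.mp ((hev1.and hev2).and (eventually_ge_atTop 1))
    have hrel : ∀ t : ℕ, birkhoffSum ⇑T g' t y = t - birkhoffSum ⇑T g t y := by
      intro t
      unfold birkhoffSum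
      simp only [hg'def]
      rw [Finset.sum_sub_distrib]
      simp
    have hcount_up : ∀ t, t₀ ≤ t → birkhoffSum ⇑T g t y < (δ + δ/8) * t := by
      intro t ht
      have h1 := (ht₀ t ht).1.1
      have htpos : (0:ℝ) < t := by exact_mod_cast (ht₀ t ht).2
      exact (div_lt_iff₀ htpos).mp h1
    have hcount_lo : ∀ t, t₀ ≤ t → (δ - δ/8) * t < birkhoffSum ⇑T g t y := by
      intro t ht
      have h1 := (ht₀ t ht).1.2
      have htpos : (0:ℝ) < t := by exact_mod_cast (ht₀ t ht).2
      rw [hrel t] at h1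
      have := (div_lt_iff₀ htpos).mp h1
      nlinarith
    -- records
    have hyE' : ¬ BddAbove (Set.range fun n : ℕ => S (n+1) y) := hyE
    have hrec : ∀ K : ℕ, ∃ k : ℕ, K < k ∧ ∀ j : ℕ, j < k → S j y < S k y := by
      intro K
      have hne : (Finset.range (K+1)).Nonempty := ⟨0, by simp⟩
      set V := (Finset.range (K+1)).sup' hne (fun j => S j y) with hVdef
      have hex : ∃ k : ℕ, V < S k y := by
        obtain ⟨z, ⟨nn, rfl⟩, hz⟩ := not_bddAbove_iff'.mp hyE' V
        exact ⟨nn+1, lt_of_not_ge hz⟩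
      refine ⟨Nat.find hex, ?_, ?_⟩
      · by_contra hcon
        push_neg at hcon
        have hle : S (Nat.find hex) y ≤ V :=
          Finset.le_sup' (fun j => S j y) (Finset.mem_range.mpr (by omega))
        linarith [Nat.find_spec hex]
      · intro j hj
        have hmin := Nat.find_min hex hj
        push_neg at hmin
        exact lt_of_le_of_lt hmin (Nat.find_spec hex)
    obtain ⟨k, hkK, hkrec⟩ := hrec (max (2 * t₀ + 2) (max (t₀ + N + 1) (3 * N + 5)))
    have hK1 : 2 * t₀ + 2 < k := lt_of_le_of_lt (le_max_left _ _) hkK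
    have hK2 : t₀ + N + 1 < k :=
      lt_of_le_of_lt ((le_max_left _ _).trans (le_max_right _ _)) hkK
    have hK3 : 3 * N + 5 < k :=
      lt_of_le_of_lt ((le_max_right _ _).trans (le_max_right _ _)) hkK
    set hh : ℕ := (k+1)/2 with hhdef
    set r : ℕ := k - N - 1 with hrdef
    have hk1 : 2 * hh ≤ k + 1 := by omega
    have hk2 : k ≤ 2 * hh := by omega
    have hht₀ : t₀ ≤ hh := by omega
    have hrt₀ : t₀ ≤ r := by omega
    have h79 : 9 * hh < 7 * r := by omega
    have hcr : (δ - δ/8) * r < birkhoffSum ⇑T g r y := hcount_lo r hrt₀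
    have hch : birkhoffSum ⇑T g hh y < (δ + δ/8) * hh := hcount_up hh hht₀
    have hcompare : (δ + δ/8) * hh < (δ - δ/8) * r := by
      have hcast : (9:ℝ) * hh < 7 * r := by exact_mod_cast h79
      nlinarith [hδpos]
    have hsplit : birkhoffSum ⇑T g r y
        = birkhoffSum ⇑T g hh y + birkhoffSum ⇑T g (r - hh) ((⇑T)^[hh] y) := by
      rw [← birkhoffSum_add]
      congr 1
      omega
    have hsum_pos : 0 < birkhoffSum ⇑T g (r - hh) ((⇑T)^[hh] y) := by linarith
    obtain ⟨i, hi_mem, hipos⟩ : ∃ i ∈ Finset.range (r - hh), 0 < g ((⇑T)^[i] ((⇑T)^[hh] y)) := by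
      by_contra hcon
      push_neg at hcon
      have hle : birkhoffSum ⇑T g (r - hh) ((⇑T)^[hh] y) ≤ 0 :=
        Finset.sum_nonpos fun i hi => hcon i hi
      linarith
    set m : ℕ := i + hh with hmdef
    have hzm : (⇑T)^[i] ((⇑T)^[hh] y) = (⇑T)^[m] y := by
      rw [hmdef, Function.iterate_add_apply]
    have hzA : (⇑T)^[m] y ∈ A := by
      by_contra hcon
      rw [hzm, hgdef, Set.indicator_of_notMem hcon] at hipos
      exact lt_irrefl 0 hipos
    have him : i < r - hh := Finset.mem_range.mp hi_mem
    set n : ℕ := k - m - 1 with hndef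
    have hmr : m < r := by omega
    have hnN : N < n := by omega
    have hnm : n ≤ m := by omega
    have hmnk : m + n + 1 = k := by omega
    have hw := hAwin _ hzA n hnN
    rw [window_sum_eq T f y m n hnm] at hw
    rw [hmnk] at hw
    have hrec1 := hkrec (m - n) (by omega)
    simp only [hSdef] at hrec1
    linarith
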